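/- For every r ∈ ℕ with r ≥ 1, every n ∈ ℕ, and every x ∈ ℚ, the falling factorial satisfies (x)_n = Σ_{l=0}^{n} C(n,l) · D_{n−l}^{(r)}(x) · C_l^{(r)}, where D_{n−l}^{(r)}(x) are the Daehee polynomials of order r and C_l^{(r)} = C_l^{(r)}(0) are the Cauchy numbers of the first kind of order r. -/

import Mathlib

/-- `log(1+t) = ∑_{n ≥ 1} (-1)^{n+1} t^n / n` as a formal power series over `ℚ`. -/
noncomputable def logOneAdd : PowerSeries ℚ :=
  PowerSeries.mk fun n => if n = 0 then 0 else (-1 : ℚ) ^ (n + 1) / n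

/-- `e^{xt} = ∑_{n ≥ 0} x^n t^n / n!` as a formal power series over `ℚ`. -/
noncomputable def expMul (x : ℚ) : PowerSeries ℚ :=
  PowerSeries.mk fun n => x ^ n / (n.factorial : ℚ)

/-- Formal composition `f(g(t))` of power series, intended for `g` with zero
constant term (then `coeff n (g^m) = 0` for `m > n`, so the sum below is the
full composition). -/
noncomputable def psComp (f g : PowerSeries ℚ) : PowerSeries ℚ :=
  PowerSeries.mk fun n =>
    ∑ m ∈ Finset.range (n + 1),
      PowerSeries.coeff m f * PowerSeries.coeff n (g ^ m)

/-- `(1+t)^x := exp (x · log(1+t))` as a formal power series over `ℚ`. -/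
noncomputable def onePlusPow (x : ℚ) : PowerSeries ℚ :=
  psComp (PowerSeries.exp ℚ) (x • logOneAdd)

/-- The falling factorial `(x)_n = x (x-1) ⋯ (x-n+1)`. -/
def fallFact (x : ℚ) (n : ℕ) : ℚ := ∏ i ∈ Finset.range n, (x - (i : ℚ))

open PowerSeries

lemma aux_coeff_pow_of_lt {g : PowerSeries ℚ} (hg : constantCoeff g = 0) {n m : ℕ}
    (h : n < m) : coeff n (g ^ m) = 0 := by
  obtain ⟨h', rfl⟩ := X_dvd_iff.mpr hg
  rw [mul_pow, coeff_X_pow_mul', if_neg (by omega)]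

lemma aux_coeff_psComp {f g : PowerSeries ℚ} (hg : constantCoeff g = 0) {n N : ℕ}
    (h : n < N) :
    coeff n (psComp f g) = ∑ m ∈ Finset.range N, coeff m f * coeff n (g ^ m) := by
  rw [psComp, coeff_mk]
  refine Finset.sum_subset (Finset.range_subset_range.mpr h) fun m hm hnm => ?_
  rw [aux_coeff_pow_of_lt hg (by simp only [Finset.mem_range] at hm hnm ⊢; omega), mul_zero]

lemma aux_coeff_mul_congr {A A' B : PowerSeries ℚ} {n : ℕ}
    (h : ∀ k ≤ n, coeff k A = coeff k A') :
    coeff n (A * B) = coeff n (A' * B) := by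
  rw [coeff_mul, coeff_mul]
  refine Finset.sum_congr rfl fun p hp => ?_
  rw [Finset.HasAntidiagonal.mem_antidiagonal] at hp
  rw [h p.1 (by omega)]

/-- Chain rule for `psComp`. -/
lemma aux_derivative_psComp (f g : PowerSeries ℚ) (hg : constantCoeff g = 0) :
    d⁄dX ℚ (psComp f g) = psComp (d⁄dX ℚ f) g * d⁄dX ℚ g := by
  ext n
  set S : PowerSeries ℚ := ∑ m ∈ Finset.range (n + 2), coeff m f • g ^ m with hS
  set T : PowerSeries ℚ := ∑ m ∈ Finset.range (n + 1), coeff m (d⁄dX ℚ f) • g ^ m with hT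
  have hLHS : coeff n (d⁄dX ℚ (psComp f g)) = coeff n (d⁄dX ℚ S) := by
    rw [coeff_derivative, coeff_derivative]
    congr 1
    rw [aux_coeff_psComp hg (by omega : n + 1 < n + 2), hS]
    simp [coeff_smul]
  have hRHS : coeff n (psComp (d⁄dX ℚ f) g * d⁄dX ℚ g) = coeff n (T * d⁄dX ℚ g) := by
    refine aux_coeff_mul_congr fun k hk => ?_
    rw [aux_coeff_psComp hg (by omega : k < n + 1), hT]
    simp [coeff_smul]
  rw [hLHS, hRHS]
  congr 1
  -- show d⁄dX S = T * d⁄dX g as power series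
  have hdS : d⁄dX ℚ S = ∑ m ∈ Finset.range (n + 2),
      coeff m f • ((m : ℕ) • (g ^ (m - 1) * d⁄dX ℚ g)) := by
    rw [hS, map_sum]
    refine Finset.sum_congr rfl fun m _ => ?_
    rw [Derivation.map_smul, Derivation.leibniz_pow]
    simp only [smul_eq_mul]
  rw [hdS, hT, Finset.sum_range_succ']
  simp only [Nat.cast_zero, pow_zero, zero_smul, smul_zero, add_zero]
  rw [Finset.sum_mul]
  refine Finset.sum_congr rfl fun m _ => ?_
  rw [coeff_derivative, smul_mul_assoc, Nat.add_sub_cancel,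
    ← Nat.cast_smul_eq_nsmul ℚ, smul_smul]
  congr 1
  push_cast
  ring

lemma aux_constantCoeff_log : constantCoeff logOneAdd = 0 := by
  rw [← coeff_zero_eq_constantCoeff_apply, logOneAdd, coeff_mk, if_pos rfl]

lemma aux_derivative_exp : d⁄dX ℚ (exp ℚ) = exp ℚ := by
  ext n
  rw [coeff_derivative, coeff_exp, coeff_exp]
  simp only [eq_ratCast, Rat.cast_div, Rat.cast_one, Rat.cast_natCast]
  rw [Nat.factorial_succ]
  have h1 : ((n:ℚ) + 1) ≠ 0 := by positivity
  have h2 : (n.factorial : ℚ) ≠ 0 := by positivity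
  push_cast
  field_simp

lemma aux_one_add_X_mul_dlog : (1 + X) * d⁄dX ℚ logOneAdd = 1 := by
  have hd : ∀ n, coeff n (d⁄dX ℚ logOneAdd) = (-1 : ℚ) ^ n := by
    intro n
    rw [coeff_derivative, logOneAdd, coeff_mk, if_neg (Nat.succ_ne_zero n)]
    push_cast
    rw [div_mul_cancel₀]
    · rw [pow_succ, pow_succ]; ring
    · positivity
  ext n
  rw [add_mul, one_mul, map_add, coeff_one]
  cases n with
  | zero =>
    have hz : coeff 0 ((X : PowerSeries ℚ) * d⁄dX ℚ logOneAdd) = 0 := by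
      rw [← pow_one (X : PowerSeries ℚ), coeff_X_pow_mul', if_neg (by omega)]
    rw [hz, hd 0]
    norm_num
  | succ k =>
    rw [hd, ← pow_one (X : PowerSeries ℚ), coeff_X_pow_mul', if_pos (by omega)]
    rw [hd]
    simp [pow_succ]

lemma aux_ode (x : ℚ) :
    (1 + X) * d⁄dX ℚ (onePlusPow x) = C x * onePlusPow x := by
  have hu : constantCoeff (x • logOneAdd) = 0 := by
    rw [smul_eq_C_mul, map_mul, aux_constantCoeff_log, mul_zero]
  have hdu : d⁄dX ℚ (x • logOneAdd) = C x * d⁄dX ℚ logOneAdd := by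
    ext k
    rw [coeff_derivative, coeff_C_mul, coeff_smul, coeff_derivative, smul_eq_mul]
    ring
  rw [onePlusPow, aux_derivative_psComp _ _ hu, aux_derivative_exp, hdu]
  calc (1 + X) * (psComp (exp ℚ) (x • logOneAdd) * (C x * d⁄dX ℚ logOneAdd))
      = C x * psComp (exp ℚ) (x • logOneAdd) * ((1 + X) * d⁄dX ℚ logOneAdd) := by ring
    _ = C x * psComp (exp ℚ) (x • logOneAdd) := by rw [aux_one_add_X_mul_dlog, mul_one]

lemma aux_coeff_onePlusPow (x : ℚ) (n : ℕ) :
    coeff n (onePlusPow x) = fallFact x n / n.factorial := by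
  induction n with
  | zero =>
    rw [onePlusPow, psComp, coeff_mk]
    simp [fallFact, coeff_exp]
  | succ k ih =>
    have h := congrArg (coeff k) (aux_ode x)
    rw [add_mul, one_mul, map_add, coeff_derivative] at h
    have hX : coeff k ((X : PowerSeries ℚ) * d⁄dX ℚ (onePlusPow x))
        = (k : ℚ) * coeff k (onePlusPow x) := by
      cases k with
      | zero =>
        rw [← pow_one (X : PowerSeries ℚ), coeff_X_pow_mul', if_neg (by omega)]
        simp
      | succ j =>
        rw [← pow_one (X : PowerSeries ℚ), coeff_X_pow_mul', if_pos (by omega),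
          Nat.add_sub_cancel, coeff_derivative]
        push_cast
        ring
    rw [hX, coeff_C_mul, ih] at h
    have hfact : (k.factorial : ℚ) ≠ 0 := by positivity
    have hstep : fallFact x (k + 1) = fallFact x k * (x - k) := by
      rw [fallFact, fallFact, Finset.prod_range_succ]
    have hk1 : ((k : ℚ) + 1) ≠ 0 := by positivity
    have hkey : coeff (k + 1) (onePlusPow x) =
        (x * (fallFact x k / k.factorial) - k * (fallFact x k / k.factorial)) / ((k:ℚ) + 1) := by
      rw [eq_div_iff hk1]
      push_cast at h ⊢
      linarith
    rw [hkey, hstep, Nat.factorial_succ]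
    push_cast
    field_simp

lemma aux_onePlusPow_zero : onePlusPow (0 : ℚ) = 1 := by
  ext n
  rw [aux_coeff_onePlusPow, coeff_one]
  cases n with
  | zero => simp [fallFact]
  | succ k =>
    rw [if_neg (Nat.succ_ne_zero k)]
    rw [fallFact, Finset.prod_eq_zero (Finset.mem_range.mpr (Nat.succ_pos k)) (by simp)]
    simp

lemma aux_log_ne_zero : logOneAdd ≠ 0 := by
  intro h
  have := congrArg (coeff 1) h
  rw [logOneAdd, coeff_mk] at this
  norm_num at this

theorem fallFact_eq_sum_daehee_mul_cauchy_number
    (r : ℕ) (hr : 1 ≤ r) (n : ℕ) (x : ℚ) (D C : ℕ → ℚ)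
    (hD : logOneAdd ^ r * onePlusPow x =
      PowerSeries.X ^ r * (PowerSeries.mk fun k => D k / (k.factorial : ℚ)))
    (hC : (PowerSeries.X : PowerSeries ℚ) ^ r * onePlusPow (0 : ℚ) =
      logOneAdd ^ r * (PowerSeries.mk fun k => C k / (k.factorial : ℚ))) :
    fallFact x n = ∑ l ∈ Finset.range (n + 1), (n.choose l : ℚ) * D (n - l) * C l := by
  rw [aux_onePlusPow_zero, mul_one] at hC
  rw [hC] at hD
  have hcancel : onePlusPow x =
      (PowerSeries.mk fun k => C k / (k.factorial : ℚ)) *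
        (PowerSeries.mk fun k => D k / (k.factorial : ℚ)) := by
    have hne : logOneAdd ^ r ≠ 0 := pow_ne_zero _ aux_log_ne_zero
    apply mul_left_cancel₀ hne
    rw [hD]; ring
  have h := congrArg (coeff n) hcancel
  rw [aux_coeff_onePlusPow, coeff_mul, Finset.Nat.sum_antidiagonal_eq_sum_range_succ_mk] at h
  simp only [coeff_mk] at h
  have hn : (n.factorial : ℚ) ≠ 0 := by positivity
  rw [div_eq_iff hn] at h
  rw [h, Finset.sum_mul]
  refine Finset.sum_congr rfl fun l hl => ?_
  rw [Finset.mem_range] at hl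
  have hln : l ≤ n := by omega
  rw [Nat.cast_choose ℚ hln]
  have h1 : (l.factorial : ℚ) ≠ 0 := by positivity
  have h2 : ((n - l).factorial : ℚ) ≠ 0 := by positivity
  field_simp
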